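/- Let A be a divisible abelian group, J an index set, and {m_i}_{i∈I} a family of elements of the free abelian group ⊕_{j∈J} ℤ·x_j that is linearly independent over ℤ. Then for any family {a_i}_{i∈I} of elements of A, there exists a ℤ-module homomorphism f : ⊕_{j∈J} ℤ·x_j → A with f(m_i) = a_i for all i ∈ I. -/

import Mathlib

/-- Every nonsingular system of equations over a divisible abelian group
is solvable in the group itself. -/
theorem divisible_solvable {A : Type*} [AddCommGroup A]
    (hdiv : ∀ (a : A) (n : ℕ), 0 < n → ∃ b : A, n • b = a)
    {I J : Type*} (m : I → (J →₀ ℤ))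
    (hli : LinearIndependent ℤ m) (a : I → A) :
    ∃ f : (J →₀ ℤ) →ₗ[ℤ] A, ∀ i, f (m i) = a i := by
  classical
  letI : DivisibleBy A ℕ :=
    { div := fun x n => if h : 0 < n then (hdiv x n h).choose else 0
      div_zero := fun x => by simp
      div_cancel := fun {n} x hn => by
        have hn' : 0 < n := Nat.pos_of_ne_zero hn
        simp only [dif_pos hn']
        exact (hdiv x n hn').choose_spec }
  letI : DivisibleBy A ℤ := AddGroup.divisibleByIntOfDivisibleByNat A
  have hBaer : Module.Baer ℤ A := Module.Baer.of_divisible A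
  set S := Submodule.span ℤ (Set.range m)
  let b : Module.Basis I ℤ S := Module.Basis.span hli
  let g : S →ₗ[ℤ] A := b.constr ℤ a
  obtain ⟨f, hf⟩ := hBaer.extension_property S.subtype Subtype.coe_injective g
  refine ⟨f, fun i => ?_⟩
  have hmem : m i ∈ S := Submodule.subset_span ⟨i, rfl⟩
  have : f (m i) = g ⟨m i, hmem⟩ := by
    have := congrFun (congrArg (fun h => h.toFun) hf) ⟨m i, hmem⟩
    simpa using this
  rw [this]
  have hb : b i = ⟨m i, hmem⟩ := Module.Basis.span_apply hli i
  rw [← hb]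
  simp [g, Module.Basis.constr_basis]
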